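/- Let L_{j,i} ∈ R = K[x_0, x_1, …, x_n] (1 ≤ j ≤ n, 1 ≤ i ≤ ℓ_j, n ≥ 2) be linear forms satisfying condition (α'), and set f_j = ∏_{i=1}^{ℓ_j} L_{j,i} and I = (f_i f_j : 1 ≤ i < j ≤ n). Then I = ⋂_{k=1}^n ⋂_{1 ≤ i_h ≤ ℓ_h for h ≠ k} (L_{1,i_1}, …, L_{k−1,i_{k−1}}, L_{k+1,i_{k+1}}, …, L_{n,i_n}), an intersection of prime ideals each generated by n−1 linearly independent linear forms; in particular I is a radical ideal, so a complete pseudo-grid of lines is a reduced configuration of lines. -/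

import Mathlib

open MvPolynomial

set_option linter.unusedSectionVars false
set_option linter.unusedVariables false
set_option maxHeartbeats 1000000

noncomputable section PG

variable {K : Type} [Field K] {σ : Type} [Fintype σ] [DecidableEq σ]

/-- linear form with coefficient vector `a`. -/
noncomputable def pgLin : (σ → K) →ₗ[K] MvPolynomial σ K where
  toFun a := ∑ t, a t • X t
  map_add' a b := by simp [add_smul, Finset.sum_add_distrib]
  map_smul' r a := by simp [Finset.smul_sum, smul_smul]

lemma pgLin_apply (a : σ → K) : pgLin (K := K) a = ∑ t, a t • X t := rfl

lemma pgLin_coeff (a : σ → K) (s : σ) :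
    coeff (Finsupp.single s 1) (pgLin (K := K) a) = a s := by
  rw [pgLin_apply]
  rw [coeff_sum]
  rw [Finset.sum_eq_single s]
  · simp [coeff_smul, coeff_X]
  · intro t _ hts
    have : ¬ (Finsupp.single t 1 = Finsupp.single s 1) := by
      simp [Finsupp.single_left_inj (one_ne_zero (α := ℕ)), hts]
    simp [coeff_smul, coeff_X', this]
  · simp

lemma pgLin_single (t : σ) : pgLin (K := K) (Pi.single t 1) = X t := by
  rw [pgLin_apply, Finset.sum_eq_single t]
  · simp
  · intro b _ hbt; simp [Pi.single_apply, hbt]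
  · simp

lemma pgLin_isHomogeneous (a : σ → K) : (pgLin (K := K) a).IsHomogeneous 1 := by
  rw [pgLin_apply]
  apply MvPolynomial.IsHomogeneous.sum
  intro t _
  rw [smul_eq_C_mul]
  simpa using (isHomogeneous_C σ (a t)).mul (isHomogeneous_X K t)

lemma Finsupp.degree_eq_one {m : σ →₀ ℕ} (hm : m.degree = 1) :
    ∃ t, m = Finsupp.single t 1 := by
  classical
  have hne : m.support.Nonempty := by
    by_contra h
    rw [Finset.not_nonempty_iff_eq_empty] at h
    rw [Finsupp.degree_apply, h] at hm; simp at hm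
  obtain ⟨t, ht⟩ := hne
  refine ⟨t, ?_⟩
  have hsub : m.support ⊆ {t} := by
    intro s hs
    by_contra hst
    simp only [Finset.mem_singleton] at hst
    have h2 : 2 ≤ m.degree := by
      rw [Finsupp.degree]
      calc 2 = 1 + 1 := rfl
      _ ≤ m s + m t := add_le_add (Nat.one_le_iff_ne_zero.2 (Finsupp.mem_support_iff.1 hs))
          (Nat.one_le_iff_ne_zero.2 (Finsupp.mem_support_iff.1 ht))
      _ ≤ ∑ i ∈ m.support, m i := by
          rw [← Finset.sum_pair hst]
          exact Finset.sum_le_sum_of_subset (by intro x hx; simp at hx; rcases hx with h|h <;> simp [h, hs, ht])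
    omega
  have hmt : m t = 1 := by
    have : m.degree = m t := by
      rw [Finsupp.degree_apply, Finset.sum_eq_single_of_mem t ht]
      intro b hb hbt; exact absurd (hsub hb) (by simp [hbt])
    omega
  ext s
  rcases eq_or_ne s t with rfl | hst
  · simp [hmt]
  · have : s ∉ m.support := fun hs => hst (Finset.mem_singleton.1 (hsub hs))
    simp [Finsupp.notMem_support_iff.1 this, Finsupp.single_apply, Ne.symm hst]

/-- every degree-1 homogeneous polynomial is `pgLin` of its coefficient vector. -/
lemma IsHomogeneous.eq_pgLin {p : MvPolynomial σ K} (hp : p.IsHomogeneous 1) :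
    p = pgLin (fun t => coeff (Finsupp.single t 1) p) := by
  apply MvPolynomial.ext
  intro m
  rcases eq_or_ne m.degree 1 with hd | hd
  · obtain ⟨t, rfl⟩ := Finsupp.degree_eq_one hd
    rw [pgLin_coeff]
  · rw [hp.coeff_eq_zero hd]
    rw [pgLin_apply, coeff_sum]
    symm
    apply Finset.sum_eq_zero
    intro t _
    have : ¬ (Finsupp.single t 1 = m) := by
      rintro rfl
      apply hd
      rw [Finsupp.degree_apply, Finsupp.support_single_ne_zero t (one_ne_zero), Finset.sum_singleton,
        Finsupp.single_eq_same]
    simp [coeff_smul, coeff_X', this]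

end PG
section PGB

variable {K : Type} [Field K] {σ : Type} [Fintype σ] [DecidableEq σ]

variable (K) in
noncomputable def pgKill (T : Set σ) [DecidablePred (· ∈ T)] :
    MvPolynomial σ K →ₐ[K] MvPolynomial σ K :=
  aeval (fun t => if t ∈ T then 0 else X t)

lemma pgKill_sub_mem (T : Set σ) [DecidablePred (· ∈ T)] (p : MvPolynomial σ K) :
    p - pgKill K T p ∈ Ideal.span (X '' T : Set (MvPolynomial σ K)) := by
  induction p using MvPolynomial.induction_on with
  | C c => simp [pgKill]
  | add p q hp hq =>
      have := Ideal.add_mem _ hp hq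
      simpa [add_sub_add_comm] using this
  | mul_X p t hp =>
      rw [pgKill] at hp ⊢
      rw [map_mul, aeval_X]
      by_cases ht : t ∈ T
      · simp only [ht, if_pos]
        rw [mul_zero, sub_zero]
        exact Ideal.mul_mem_left _ p (Ideal.subset_span ⟨t, ht, rfl⟩)
      · simp only [ht, if_neg, not_false_iff]
        have : p * X t - (aeval fun t => if t ∈ T then 0 else X t) p * X t
            = (p - (aeval fun t => if t ∈ T then 0 else X t) p) * X t := by ring
        rw [this]
        exact Ideal.mul_mem_right _ _ hp

lemma pgSpanX_eq_ker (T : Set σ) [DecidablePred (· ∈ T)] :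
    Ideal.span (X '' T : Set (MvPolynomial σ K)) = RingHom.ker (pgKill K T).toRingHom := by
  apply le_antisymm
  · rw [Ideal.span_le]
    rintro g ⟨t, ht, rfl⟩
    simp [RingHom.mem_ker, pgKill, ht]
  · intro p hp
    rw [RingHom.mem_ker] at hp
    have := pgKill_sub_mem T p
    rw [show (pgKill K T).toRingHom p = pgKill K T p from rfl] at hp
    rwa [hp, sub_zero] at this

lemma pgSpanX_isPrime (T : Set σ) [DecidablePred (· ∈ T)] :
    (Ideal.span (X '' T : Set (MvPolynomial σ K))).IsPrime := by
  rw [pgSpanX_eq_ker]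
  exact RingHom.ker_isPrime _

lemma pgSpanX_degree_one (T : Set σ) {p : MvPolynomial σ K} (hp : p.IsHomogeneous 1)
    (hmem : p ∈ Ideal.span (X '' T : Set (MvPolynomial σ K))) :
    p ∈ Submodule.span K (X '' T : Set (MvPolynomial σ K)) := by
  classical
  rw [mem_ideal_span_X_image] at hmem
  have hrep := IsHomogeneous.eq_pgLin hp
  rw [hrep, pgLin_apply]
  apply Submodule.sum_mem
  intro t _
  by_cases hc : coeff (Finsupp.single t 1) p = 0
  · simp [hc]
  · apply Submodule.smul_mem
    apply Submodule.subset_span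
    have hsup : Finsupp.single t 1 ∈ p.support := by
      rwa [MvPolynomial.mem_support_iff]
    obtain ⟨i, hi, hne⟩ := hmem _ hsup
    have : i = t := by
      by_contra h
      exact hne (by simp [Finsupp.single_apply, Ne.symm h])
    exact ⟨t, this ▸ hi, rfl⟩

end PGB
section PGC

variable {K : Type} [Field K] {σ : Type} [Fintype σ] [DecidableEq σ]

noncomputable def pgSub (A : (σ → K) →ₗ[K] (σ → K)) :
    MvPolynomial σ K →ₐ[K] MvPolynomial σ K :=
  aeval (fun t => pgLin (A (Pi.single t 1)))

lemma pgSub_X (A : (σ → K) →ₗ[K] (σ → K)) (t : σ) :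
    pgSub A (X t) = pgLin (A (Pi.single t 1)) := by
  simp [pgSub]

lemma pi_sum_single (a : σ → K) : ∑ t, a t • (Pi.single t (1 : K) : σ → K) = a := by
  ext s
  rw [Finset.sum_apply]
  rw [Finset.sum_eq_single s]
  · simp
  · intro b _ hbs; simp [Pi.single_apply, Ne.symm hbs]
  · simp

lemma pgSub_pgLin (A : (σ → K) →ₗ[K] (σ → K)) (a : σ → K) :
    pgSub A (pgLin a) = pgLin (A a) := by
  rw [pgLin_apply, map_sum]
  simp_rw [map_smul, pgSub_X]
  have : ∀ t : σ, pgLin (A (Pi.single t (1:K))) = (pgLin.comp A) (Pi.single t (1:K)) :=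
    fun t => rfl
  simp_rw [this, ← map_smul, ← map_sum, pi_sum_single]
  rfl

noncomputable def pgChange (A : (σ → K) ≃ₗ[K] (σ → K)) :
    MvPolynomial σ K ≃ₐ[K] MvPolynomial σ K := by
  refine AlgEquiv.ofAlgHom (pgSub (A : (σ → K) →ₗ[K] (σ → K)))
    (pgSub (A.symm : (σ → K) →ₗ[K] (σ → K))) ?_ ?_
  · apply MvPolynomial.algHom_ext
    intro t
    show pgSub (A : (σ → K) →ₗ[K] (σ → K)) (pgSub (A.symm : (σ → K) →ₗ[K] (σ → K)) (X t)) = X t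
    rw [pgSub_X, pgSub_pgLin]
    simp [pgLin_single]
  · apply MvPolynomial.algHom_ext
    intro t
    show pgSub (A.symm : (σ → K) →ₗ[K] (σ → K)) (pgSub (A : (σ → K) →ₗ[K] (σ → K)) (X t)) = X t
    rw [pgSub_X, pgSub_pgLin]
    simp [pgLin_single]

lemma pgChange_X (A : (σ → K) ≃ₗ[K] (σ → K)) (t : σ) :
    pgChange A (X t) = pgLin (A (Pi.single t 1)) :=
  pgSub_X (A : (σ → K) →ₗ[K] (σ → K)) t

lemma pgChange_pgLin (A : (σ → K) ≃ₗ[K] (σ → K)) (a : σ → K) :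
    pgChange A (pgLin a) = pgLin (A a) :=
  pgSub_pgLin _ a

end PGC
section PGD

variable {K : Type} [Field K] {σ : Type} [Fintype σ] [DecidableEq σ]

lemma pgChange_symm_pgLin (A : (σ → K) ≃ₗ[K] (σ → K)) (a : σ → K) :
    (pgChange A).symm (pgLin a) = pgLin (A.symm a) := by
  apply (pgChange A).injective
  rw [AlgEquiv.apply_symm_apply, pgChange_pgLin, LinearEquiv.apply_symm_apply]

/-- Main structural lemma: the ideal generated by a linearly independent family of
linear forms is prime, and its degree-one part is the linear span of the family. -/
lemma pg_main {ι : Type} (v : ι → MvPolynomial σ K)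
    (hhom : ∀ i, (v i).IsHomogeneous 1) (hind : LinearIndependent K v) :
    (Ideal.span (Set.range v)).IsPrime ∧
    ∀ p : MvPolynomial σ K, p.IsHomogeneous 1 → p ∈ Ideal.span (Set.range v) →
      p ∈ Submodule.span K (Set.range v) := by
  classical
  set w : ι → (σ → K) := fun i t => coeff (Finsupp.single t 1) (v i) with hw_def
  have hvw : ∀ i, v i = pgLin (w i) := fun i => IsHomogeneous.eq_pgLin (hhom i)
  have hvcomp : v = pgLin (K := K) (σ := σ) ∘ w := funext hvw
  have hwind : LinearIndependent K w := by
    apply LinearIndependent.of_comp (pgLin (K := K) (σ := σ))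
    rwa [← hvcomp]
  have hs : LinearIndepOn K id (Set.range w) := (linearIndepOn_id_range_iff hwind.injective).mpr hwind
  set B := Module.Basis.extend hs with hB_def
  set e : _ ≃ σ := B.indexEquiv (Pi.basisFun K σ) with he_def
  set A : (σ → K) ≃ₗ[K] (σ → K) := (Pi.basisFun K σ).equiv B e.symm with hA_def
  have hAsingle : ∀ t : σ, A (Pi.single t 1) = B (e.symm t) := by
    intro t
    rw [hA_def, ← Pi.basisFun_apply (R := K), Module.Basis.equiv_apply]
  set Φ := pgChange A with hΦ_def
  have hΦX : ∀ t, Φ (X t) = pgLin (B (e.symm t)) := by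
    intro t; rw [hΦ_def, pgChange_X, hAsingle]
  set T : Set σ := {t | (B (e.symm t) : σ → K) ∈ Set.range w} with hT_def
  have hBval : ∀ y, (B y : σ → K) = ↑y := fun y => Module.Basis.extend_apply_self hs y
  have himg : (fun x => Φ x) '' (X '' T) = Set.range v := by
    ext g
    constructor
    · rintro ⟨-, ⟨t, ht, rfl⟩, rfl⟩
      obtain ⟨i, hi⟩ := ht
      show Φ (X t) ∈ Set.range v
      rw [hΦX, ← hi, ← hvw]
      exact Set.mem_range_self i
    · rintro ⟨i, rfl⟩
      have hmem : w i ∈ hs.extend (Set.subset_univ _) :=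
        Module.Basis.subset_extend hs (Set.mem_range_self i)
      refine ⟨X (e ⟨w i, hmem⟩), ⟨e ⟨w i, hmem⟩, ?_, rfl⟩, ?_⟩
      · show (B (e.symm (e ⟨w i, hmem⟩)) : σ → K) ∈ Set.range w
        rw [Equiv.symm_apply_apply, hBval]
        exact Set.mem_range_self i
      · show Φ (X (e ⟨w i, hmem⟩)) = v i
        rw [hΦX, Equiv.symm_apply_apply, hBval, ← hvw]
  have hmap : Ideal.span (Set.range v) =
      Ideal.map (Φ : MvPolynomial σ K ≃+* MvPolynomial σ K)
        (Ideal.span (X '' T : Set (MvPolynomial σ K))) := by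
    rw [Ideal.map_span, ← himg]
    rfl
  haveI hprimeX : (Ideal.span (X '' T : Set (MvPolynomial σ K))).IsPrime := pgSpanX_isPrime T
  constructor
  · rw [hmap]
    exact Ideal.map_isPrime_of_equiv _
  · intro p hp hpmem
    rw [hmap] at hpmem
    rw [Ideal.mem_map_of_equiv] at hpmem
    obtain ⟨q, hq, hqp⟩ := hpmem
    have hqΦ : Φ q = p := hqp
    have hqhom : q.IsHomogeneous 1 := by
      have hp' : p = pgLin (fun t => coeff (Finsupp.single t 1) p) := IsHomogeneous.eq_pgLin hp
      have : q = Φ.symm p := by rw [← hqΦ, AlgEquiv.symm_apply_apply]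
      rw [this, hp', hΦ_def, pgChange_symm_pgLin]
      exact pgLin_isHomogeneous _
    have hqspan : q ∈ Submodule.span K (X '' T : Set (MvPolynomial σ K)) :=
      pgSpanX_degree_one T hqhom hq
    have : p ∈ Submodule.map (Φ.toLinearMap : MvPolynomial σ K →ₗ[K] MvPolynomial σ K)
        (Submodule.span K (X '' T : Set (MvPolynomial σ K))) := by
      exact ⟨q, hqspan, hqΦ⟩
    rw [Submodule.map_span, show (Φ.toLinearMap : MvPolynomial σ K →ₗ[K] MvPolynomial σ K) ''
      (X '' T) = Set.range v from himg] at this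
    exact this

end PGD
section PGE

variable {K : Type} [Field K] {n : ℕ} {ℓ : Fin n → ℕ}
variable (L : (j : Fin n) → Fin (ℓ j) → MvPolynomial (Fin (n + 1)) K)

/-- ideal generated by the linear forms selected by `c` at positions in `U`. -/
noncomputable def pgQ (U : Finset (Fin n)) (c : (j : Fin n) → Fin (ℓ j)) :
    Ideal (MvPolynomial (Fin (n + 1)) K) :=
  Ideal.span ((fun j => L j (c j)) '' (↑U : Set (Fin n)))

lemma pgQ_congr {U : Finset (Fin n)} {c c' : (j : Fin n) → Fin (ℓ j)}
    (h : ∀ j ∈ U, c j = c' j) : pgQ L U c = pgQ L U c' := by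
  unfold pgQ
  congr 1
  apply Set.image_congr
  intro j hj
  rw [h j hj]

lemma pgQ_insert (U : Finset (Fin n)) (m : Fin n) (c : (j : Fin n) → Fin (ℓ j)) :
    pgQ L (insert m U) c = Ideal.span {L m (c m)} ⊔ pgQ L U c := by
  unfold pgQ
  rw [Finset.coe_insert, Set.image_insert_eq, Ideal.span_insert]

lemma pgQ_union (U U' : Finset (Fin n)) (c : (j : Fin n) → Fin (ℓ j)) :
    pgQ L (U ∪ U') c = pgQ L U c ⊔ pgQ L U' c := by
  unfold pgQ
  rw [Finset.coe_union, Set.image_union, Ideal.span_union]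

lemma pgQ_empty (c : (j : Fin n) → Fin (ℓ j)) : pgQ L (∅ : Finset (Fin n)) c = ⊥ := by
  unfold pgQ
  simp [Ideal.span_empty]

variable (hLhom : ∀ j i, (L j i).IsHomogeneous 1)
variable (hα : ∀ c : (j : Fin n) → Fin (ℓ j), LinearIndependent K (fun j => L j (c j)))

include hLhom hα in
lemma pg_prime (U : Finset (Fin n)) (c : (j : Fin n) → Fin (ℓ j)) :
    (pgQ L U c).IsPrime := by
  have himg : (fun j => L j (c j)) '' (↑U : Set (Fin n)) =
      Set.range (fun x : (↑U : Set (Fin n)) => L x (c x)) :=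
    Set.image_eq_range _ _
  unfold pgQ
  rw [himg]
  exact (pg_main _ (fun x => hLhom _ _)
    ((hα c).comp Subtype.val Subtype.val_injective)).1

include hLhom hα in
lemma pg_degree_one (U : Finset (Fin n)) (c : (j : Fin n) → Fin (ℓ j))
    {p : MvPolynomial (Fin (n + 1)) K} (hp : p.IsHomogeneous 1) (hmem : p ∈ pgQ L U c) :
    p ∈ Submodule.span K ((fun j => L j (c j)) '' (↑U : Set (Fin n))) := by
  have himg : (fun j => L j (c j)) '' (↑U : Set (Fin n)) =
      Set.range (fun x : (↑U : Set (Fin n)) => L x (c x)) :=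
    Set.image_eq_range _ _
  rw [himg]
  unfold pgQ at hmem
  rw [himg] at hmem
  exact (pg_main _ (fun x => hLhom _ _)
    ((hα c).comp Subtype.val Subtype.val_injective)).2 p hp hmem

variable (hα' : ∀ c c' : (j : Fin n) → Fin (ℓ j), c ≠ c' →
      Submodule.span K (Set.range fun j => L j (c j)) ≠
        Submodule.span K (Set.range fun j => L j (c' j)))

include hLhom hα hα' in
/-- condition (α'): a linear form not selected does not lie in a selected prime. -/
lemma pg_star (U : Finset (Fin n)) (e : (j : Fin n) → Fin (ℓ j)) (m : Fin n)
    (i' : Fin (ℓ m)) (h : m ∉ U ∨ i' ≠ e m) : L m i' ∉ pgQ L U e := by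
  classical
  intro hmem
  have hspan : L m i' ∈ Submodule.span K ((fun j => L j (e j)) '' (↑U : Set (Fin n))) :=
    pg_degree_one L hLhom hα U e (hLhom m i') hmem
  rcases h with hmU | hne
  · -- m ∉ U : contradicts linear independence of the updated selection
    have himg : (fun j => L j (e j)) '' (↑U : Set (Fin n)) =
        (fun j => L j (Function.update e m i' j)) '' (↑U : Set (Fin n)) := by
      apply Set.image_congr
      intro j hj
      have : j ≠ m := fun hjm => hmU (by rwa [hjm] at hj)
      rw [Function.update_of_ne this]
    rw [himg] at hspan
    have hnotmem := LinearIndependent.notMem_span_image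
      (hα (Function.update e m i')) (s := (↑U : Set (Fin n))) (x := m) hmU
    apply hnotmem
    show L m (Function.update e m i' m) ∈ Submodule.span K
        ((fun j => L j (Function.update e m i' j)) '' (↑U : Set (Fin n)))
    rw [Function.update_self]
    exact hspan
  · -- i' ≠ e m : contradicts distinctness of spans
    have hsub : L m i' ∈ Submodule.span K (Set.range fun j => L j (e j)) := by
      refine Submodule.span_mono ?_ hspan
      exact Set.image_subset_range _ _
    have hee' : Function.update e m i' ≠ e := by
      intro hcontr
      apply hne
      rw [← congrFun hcontr m, Function.update_self]
    apply hα' (Function.update e m i') e hee'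
    have hle : Submodule.span K (Set.range fun j => L j (Function.update e m i' j)) ≤
        Submodule.span K (Set.range fun j => L j (e j)) := by
      rw [Submodule.span_le]
      rintro g ⟨j, rfl⟩
      show L j (Function.update e m i' j) ∈ (Submodule.span K (Set.range fun j => L j (e j)) : Set _)
      rcases eq_or_ne j m with rfl | hjm
      · rw [Function.update_self]
        exact hsub
      · rw [Function.update_of_ne hjm]
        exact Submodule.subset_span (Set.mem_range_self j)
    haveI : FiniteDimensional K
        (Submodule.span K (Set.range fun j => L j (e j))) :=
      FiniteDimensional.span_of_finite K (Set.finite_range _)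
    apply Submodule.eq_of_le_of_finrank_le hle
    rw [finrank_span_eq_card (hα e), finrank_span_eq_card (hα (Function.update e m i'))]

end PGE
section PGF

lemma pg_step {R : Type} [CommRing R] (A : Ideal R) (g h : R)
    (hreg : ∀ r, r * h ∈ A ⊔ Ideal.span {g} → r ∈ A ⊔ Ideal.span {g}) :
    (A ⊔ Ideal.span {g}) ⊓ (A ⊔ Ideal.span {h}) = A ⊔ Ideal.span {g * h} := by
  apply le_antisymm
  · rintro x ⟨hx1, hx2⟩
    obtain ⟨a, ha, y, hy, rfl⟩ := Submodule.mem_sup.1 hx2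
    obtain ⟨r, rfl⟩ := Ideal.mem_span_singleton'.1 hy
    have hrh : r * h ∈ A ⊔ Ideal.span {g} := by
      have : (a + r * h) - a ∈ A ⊔ Ideal.span {g} :=
        Ideal.sub_mem _ hx1 (Ideal.mem_sup_left ha)
      simpa using this
    obtain ⟨a', ha', z, hz, hz'⟩ := Submodule.mem_sup.1 (hreg r hrh)
    obtain ⟨s, rfl⟩ := Ideal.mem_span_singleton'.1 hz
    have : a + r * h = a + a' * h + s * (g * h) := by
      rw [← hz']; ring
    rw [this]
    exact Ideal.add_mem _
      (Ideal.mem_sup_left (Ideal.add_mem _ ha (Ideal.mul_mem_right _ _ ha')))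
      (Ideal.mem_sup_right (Ideal.mem_span_singleton'.2 ⟨s, rfl⟩))
  · apply sup_le
    · exact le_inf le_sup_left le_sup_left
    · apply le_inf
      · exact le_trans (Ideal.span_singleton_le_span_singleton.2 ⟨h, rfl⟩) le_sup_right
      · exact le_trans (Ideal.span_singleton_le_span_singleton.2 ⟨g, mul_comm g h⟩) le_sup_right

variable {K : Type} [Field K] {n : ℕ} {ℓ : Fin n → ℕ}
variable (L : (j : Fin n) → Fin (ℓ j) → MvPolynomial (Fin (n + 1)) K)
variable (hℓ : ∀ j, 0 < ℓ j)
variable (hLhom : ∀ j i, (L j i).IsHomogeneous 1)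
variable (hα : ∀ c : (j : Fin n) → Fin (ℓ j), LinearIndependent K (fun j => L j (c j)))
variable (hα' : ∀ c c' : (j : Fin n) → Fin (ℓ j), c ≠ c' →
      Submodule.span K (Set.range fun j => L j (c j)) ≠
        Submodule.span K (Set.range fun j => L j (c' j)))
variable (f : Fin n → MvPolynomial (Fin (n + 1)) K)
variable (hf : ∀ j, f j = ∏ i : Fin (ℓ j), L j i)

include hℓ hLhom hα hα' hf in
lemma pg_master : ∀ T S : Finset (Fin n), Disjoint S T → ∀ c₀ : (j : Fin n) → Fin (ℓ j),
    (⨅ d : (j : Fin n) → Fin (ℓ j), pgQ L S c₀ ⊔ pgQ L T d)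
      = pgQ L S c₀ ⊔ Ideal.span (f '' ↑T) := by
  classical
  haveI : Nonempty ((j : Fin n) → Fin (ℓ j)) := ⟨fun j => ⟨0, hℓ j⟩⟩
  intro T
  induction T using Finset.induction_on with
  | empty =>
      intro S _ c₀
      simp [pgQ_empty, Ideal.span_empty]
  | @insert m T' hmT' IH =>
      intro S hdisj c₀
      have hmS : m ∉ S := fun hmS => (Finset.disjoint_left.1 hdisj hmS) (Finset.mem_insert_self m T')
      have hdisj' : Disjoint S T' := by
        apply Finset.disjoint_left.2
        intro a haS haT'
        exact (Finset.disjoint_left.1 hdisj haS) (Finset.mem_insert_of_mem haT')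
      -- IH applied to `insert m S`
      have hdisj'' : ∀ i : Fin (ℓ m), Disjoint (insert m S) T' := by
        intro i
        apply Finset.disjoint_left.2
        intro a haS haT'
        rcases Finset.mem_insert.1 haS with rfl | haS
        · exact hmT' haT'
        · exact Finset.disjoint_left.1 hdisj' haS haT'
      -- key reformulation of `Q S c₀ ⊔ F T' ⊔ (L m i)` as an intersection of primes
      have hkey : ∀ i : Fin (ℓ m),
          pgQ L S c₀ ⊔ Ideal.span (f '' ↑T') ⊔ Ideal.span {L m i}
            = ⨅ d : (j : Fin n) → Fin (ℓ j),
                pgQ L (insert m S) (Function.update c₀ m i) ⊔ pgQ L T' d := by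
        intro i
        rw [IH (insert m S) (hdisj'' i) (Function.update c₀ m i)]
        rw [pgQ_insert]
        have : pgQ L S (Function.update c₀ m i) = pgQ L S c₀ :=
          pgQ_congr L (fun j hj => Function.update_of_ne (by rintro rfl; exact hmS hj) _ _)
        rw [this, Function.update_self]
        rw [sup_comm (Ideal.span {L m i}) (pgQ L S c₀), sup_right_comm]
      -- the one-variable product computation
      have hprod : ∀ u : Finset (Fin (ℓ m)),
          (⨅ i ∈ u, (pgQ L S c₀ ⊔ Ideal.span (f '' ↑T') ⊔ Ideal.span {L m i}))
            = pgQ L S c₀ ⊔ Ideal.span (f '' ↑T') ⊔ Ideal.span {∏ i ∈ u, L m i} := by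
        intro u
        induction u using Finset.induction_on with
        | empty => simp [Ideal.span_singleton_one]
        | @insert i u hiu IHu =>
            rw [Finset.iInf_insert, IHu, Finset.prod_insert hiu]
            rw [pg_step (pgQ L S c₀ ⊔ Ideal.span (f '' ↑T')) (L m i) (∏ i' ∈ u, L m i')]
            -- regularity hypothesis
            intro r hr
            rw [hkey i] at hr ⊢
            rw [Submodule.mem_iInf] at hr ⊢
            intro d
            have hrd := hr d
            set e : (j : Fin n) → Fin (ℓ j) :=
              fun j => if j ∈ T' then d j else Function.update c₀ m i j with he
            have hQe : pgQ L (insert m S) (Function.update c₀ m i) ⊔ pgQ L T' d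
                = pgQ L (insert m S ∪ T') e := by
              rw [pgQ_union]
              congr 1
              · apply pgQ_congr
                intro j hj
                have hjT' : j ∉ T' := Finset.disjoint_left.1 (hdisj'' i) hj
                rw [he]; simp [hjT']
              · apply pgQ_congr
                intro j hj
                rw [he]; simp [hj]
            rw [hQe] at hrd ⊢
            haveI hP : (pgQ L (insert m S ∪ T') e).IsPrime := pg_prime L hLhom hα _ _
            have hem : e m = i := by
              rw [he]; simp [hmT', Function.update_self]
            have hnot : (∏ i' ∈ u, L m i') ∉ pgQ L (insert m S ∪ T') e := by
              intro hin
              rw [Ideal.IsPrime.prod_mem_iff] at hin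
              obtain ⟨i'', hi''u, hi''⟩ := hin
              have : i'' ≠ e m := by
                rw [hem]
                rintro rfl
                exact hiu hi''u
              exact pg_star L hLhom hα hα' _ e m i'' (Or.inr this) hi''
            exact (hP.mem_or_mem hrd).resolve_right hnot
      -- assemble
      have step1 : (⨅ d : (j : Fin n) → Fin (ℓ j), pgQ L S c₀ ⊔ pgQ L (insert m T') d)
          = ⨅ i : Fin (ℓ m), ⨅ d : (j : Fin n) → Fin (ℓ j),
              (pgQ L S c₀ ⊔ pgQ L T' d ⊔ Ideal.span {L m i}) := by
        apply le_antisymm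
        · apply le_iInf; intro i
          apply le_iInf; intro d
          refine le_trans (iInf_le _ (Function.update d m i)) ?_
          rw [pgQ_insert]
          have h1 : pgQ L T' (Function.update d m i) = pgQ L T' d :=
            pgQ_congr L (fun j hj => Function.update_of_ne (by rintro rfl; exact hmT' hj) _ _)
          rw [h1, Function.update_self, sup_comm (Ideal.span {L m i}) (pgQ L T' d), ← sup_assoc]
        · apply le_iInf; intro d
          refine le_trans (iInf_le _ (d m)) (le_trans (iInf_le _ d) ?_)
          rw [pgQ_insert, sup_comm (Ideal.span {L m (d m)}) (pgQ L T' d), ← sup_assoc]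
      rw [step1]
      have step2 : ∀ i : Fin (ℓ m), (⨅ d : (j : Fin n) → Fin (ℓ j),
          (pgQ L S c₀ ⊔ pgQ L T' d ⊔ Ideal.span {L m i}))
            = pgQ L S c₀ ⊔ Ideal.span (f '' ↑T') ⊔ Ideal.span {L m i} := by
        intro i
        rw [hkey i]
        apply iInf_congr
        intro d
        rw [pgQ_insert]
        have : pgQ L S (Function.update c₀ m i) = pgQ L S c₀ :=
          pgQ_congr L (fun j hj => Function.update_of_ne (by rintro rfl; exact hmS hj) _ _)
        rw [this, Function.update_self]
        rw [sup_right_comm, sup_comm (Ideal.span {L m i}) (pgQ L S c₀)]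
      simp_rw [step2]
      have : (⨅ i : Fin (ℓ m), (pgQ L S c₀ ⊔ Ideal.span (f '' ↑T') ⊔ Ideal.span {L m i}))
          = ⨅ i ∈ Finset.univ, (pgQ L S c₀ ⊔ Ideal.span (f '' ↑T') ⊔ Ideal.span {L m i}) := by
        simp
      rw [this, hprod Finset.univ]
      rw [show ∏ i ∈ Finset.univ, L m i = f m from (hf m).symm]
      rw [Finset.coe_insert, Set.image_insert_eq, Ideal.span_insert]
      rw [sup_comm (Ideal.span {f m}) (Ideal.span (f '' ↑T')), ← sup_assoc]

end PGF
section PGG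

variable {K : Type} [Field K] {n : ℕ} {ℓ : Fin n → ℕ}
variable (L : (j : Fin n) → Fin (ℓ j) → MvPolynomial (Fin (n + 1)) K)
variable (hℓ : ∀ j, 0 < ℓ j)
variable (hLhom : ∀ j i, (L j i).IsHomogeneous 1)
variable (hα : ∀ c : (j : Fin n) → Fin (ℓ j), LinearIndependent K (fun j => L j (c j)))
variable (hα' : ∀ c c' : (j : Fin n) → Fin (ℓ j), c ≠ c' →
      Submodule.span K (Set.range fun j => L j (c j)) ≠
        Submodule.span K (Set.range fun j => L j (c' j)))
variable (f : Fin n → MvPolynomial (Fin (n + 1)) K)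
variable (hf : ∀ j, f j = ∏ i : Fin (ℓ j), L j i)

lemma pg_pairs_mem (k : Fin n) {i j : Fin n} (hij : i < j) :
    f i * f j ∈ Ideal.span (f '' ↑(Finset.univ.erase k)) := by
  rcases eq_or_ne j k with rfl | hjk
  · have hik : i ≠ j := Fin.ne_of_lt hij
    exact Ideal.mul_mem_right _ _
      (Ideal.subset_span ⟨i, by simp [Finset.mem_erase, hik], rfl⟩)
  · exact Ideal.mul_mem_left _ _
      (Ideal.subset_span ⟨j, by simp [Finset.mem_erase, hjk], rfl⟩)

include hℓ hLhom hα hα' hf in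
lemma pg_erase_eq_iInf (k : Fin n) :
    Ideal.span (f '' ↑(Finset.univ.erase k))
      = ⨅ d : (j : Fin n) → Fin (ℓ j), pgQ L (Finset.univ.erase k) d := by
  haveI : Nonempty ((j : Fin n) → Fin (ℓ j)) := ⟨fun j => ⟨0, hℓ j⟩⟩
  have := pg_master L hℓ hLhom hα hα' f hf (Finset.univ.erase k) ∅ (by simp)
    (Classical.arbitrary _)
  simp only [pgQ_empty, bot_sup_eq] at this
  exact this.symm

include hℓ hLhom hα hα' hf in
lemma pg_fk_regular (k : Fin n) {r : MvPolynomial (Fin (n + 1)) K}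
    (hr : r * f k ∈ Ideal.span (f '' ↑(Finset.univ.erase k))) :
    r ∈ Ideal.span (f '' ↑(Finset.univ.erase k)) := by
  rw [pg_erase_eq_iInf L hℓ hLhom hα hα' f hf] at hr ⊢
  rw [Submodule.mem_iInf] at hr ⊢
  intro d
  haveI hP : (pgQ L (Finset.univ.erase k) d).IsPrime := pg_prime L hLhom hα _ _
  have hnot : f k ∉ pgQ L (Finset.univ.erase k) d := by
    rw [hf k]
    intro hin
    rw [show (∏ i : Fin (ℓ k), L k i) = ∏ i ∈ Finset.univ, L k i from rfl,
      Ideal.IsPrime.prod_mem_iff] at hin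
    obtain ⟨i'', _, hi''⟩ := hin
    exact pg_star L hLhom hα hα' _ d k i'' (Or.inl (Finset.notMem_erase k _)) hi''
  exact (hP.mem_or_mem (hr d)).resolve_right hnot

include hℓ hLhom hα hα' hf in
lemma pg_claimD :
    ∀ (V : Finset (Fin n)) (hV : V.Nonempty),
    (⨅ k ∈ V, Ideal.span (f '' ↑(Finset.univ.erase k)))
      = Ideal.span ({g : MvPolynomial (Fin (n + 1)) K | ∃ i j : Fin n, i < j ∧ g = f i * f j}
          ∪ f '' {j : Fin n | j ∉ V}) := by
  classical
  intro V hV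
  induction hV using Finset.Nonempty.cons_induction with
  | singleton a =>
      apply le_antisymm
      · simp only [Finset.mem_singleton, iInf_iInf_eq_left]
        rw [Ideal.span_le]
        rintro g ⟨j, hj, rfl⟩
        rw [Finset.mem_coe, Finset.mem_erase] at hj
        apply Ideal.subset_span
        exact Or.inr ⟨j, by simpa using hj.1, rfl⟩
      · rw [Ideal.span_le]
        rintro g (⟨i, j, hij, rfl⟩ | ⟨j, hj, rfl⟩)
        · simp only [Finset.mem_singleton, iInf_iInf_eq_left]
          exact pg_pairs_mem f _ hij
        · simp only [Finset.mem_singleton, iInf_iInf_eq_left]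
          apply Ideal.subset_span
          exact ⟨j, by simpa [Finset.mem_erase] using hj, rfl⟩
  | cons a V haV hVne IH =>
      have hcons : (⨅ k ∈ Finset.cons a V haV, Ideal.span (f '' ↑(Finset.univ.erase k)))
          = Ideal.span (f '' ↑(Finset.univ.erase a)) ⊓
              ⨅ k ∈ V, Ideal.span (f '' ↑(Finset.univ.erase k)) := by
        rw [Finset.cons_eq_insert, Finset.iInf_insert]
      rw [hcons, IH]
      apply le_antisymm
      · rintro x ⟨hx1, hx2⟩
        have hsets : {j : Fin n | j ∉ V} = insert a {j : Fin n | j ∉ Finset.cons a V haV} := by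
          ext j
          simp only [Set.mem_setOf_eq, Set.mem_insert_iff, Finset.mem_cons, not_or]
          constructor
          · intro hj
            rcases eq_or_ne j a with rfl | hja
            · exact Or.inl rfl
            · exact Or.inr ⟨hja, hj⟩
          · rintro (rfl | ⟨hja, hj⟩)
            · exact haV
            · exact hj
        have himgV : f '' {j : Fin n | j ∉ V}
            = insert (f a) (f '' {j : Fin n | j ∉ Finset.cons a V haV}) := by
          rw [hsets, Set.image_insert_eq]
        rw [Ideal.span_union, himgV, Ideal.span_insert] at hx2
        obtain ⟨y, hy, z, hz, rfl⟩ := Submodule.mem_sup.1 hx2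
        obtain ⟨z1, hz1, w, hw, rfl⟩ := Submodule.mem_sup.1 hz
        obtain ⟨r, rfl⟩ := Ideal.mem_span_singleton'.1 hz1
        have hpairs_le : Ideal.span {g : MvPolynomial (Fin (n + 1)) K |
            ∃ i j : Fin n, i < j ∧ g = f i * f j} ≤
              Ideal.span (f '' ↑(Finset.univ.erase a)) := by
          rw [Ideal.span_le]
          rintro g ⟨i, j, hij, rfl⟩
          exact pg_pairs_mem f _ hij
        have hw_le : Ideal.span (f '' {j : Fin n | j ∉ Finset.cons a V haV}) ≤
            Ideal.span (f '' ↑(Finset.univ.erase a)) := by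
          rw [Ideal.span_le]
          rintro g ⟨j, hj, rfl⟩
          apply Ideal.subset_span
          refine ⟨j, ?_, rfl⟩
          simp only [Set.mem_setOf_eq, Finset.mem_cons, not_or] at hj
          simp [Finset.mem_erase, hj.1]
        have hrfa : r * f a ∈ Ideal.span (f '' ↑(Finset.univ.erase a)) := by
          have : r * f a = (y + (r * f a + w)) - y - w := by ring
          rw [this]
          exact Ideal.sub_mem _ (Ideal.sub_mem _ hx1 (hpairs_le hy)) (hw_le hw)
        have hr : r ∈ Ideal.span (f '' ↑(Finset.univ.erase a)) :=
          pg_fk_regular L hℓ hLhom hα hα' f hf a hrfa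
        have hrfa_pairs : r * f a ∈ Ideal.span {g : MvPolynomial (Fin (n + 1)) K |
            ∃ i j : Fin n, i < j ∧ g = f i * f j} := by
          have hmul : r * f a ∈ Ideal.span (f '' ↑(Finset.univ.erase a)) *
              Ideal.span {f a} :=
            Ideal.mul_mem_mul hr (Ideal.subset_span rfl)
          rw [Ideal.span_mul_span'] at hmul
          refine Ideal.span_le.2 ?_ hmul
          rintro g ⟨x', ⟨j, hj, rfl⟩, y', hy', rfl⟩
          rw [Set.mem_singleton_iff] at hy'
          subst hy'
          rw [Finset.mem_coe, Finset.mem_erase] at hj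
          apply Ideal.subset_span
          rcases lt_or_gt_of_ne hj.1 with h | h
          · exact ⟨j, a, h, rfl⟩
          · exact ⟨a, j, h, mul_comm _ _⟩
        have hyG : y ∈ Ideal.span ({g : MvPolynomial (Fin (n + 1)) K |
            ∃ i j : Fin n, i < j ∧ g = f i * f j}
              ∪ f '' {j : Fin n | j ∉ Finset.cons a V haV}) :=
          Ideal.span_mono Set.subset_union_left hy
        have hwG : w ∈ Ideal.span ({g : MvPolynomial (Fin (n + 1)) K |
            ∃ i j : Fin n, i < j ∧ g = f i * f j}
              ∪ f '' {j : Fin n | j ∉ Finset.cons a V haV}) :=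
          Ideal.span_mono Set.subset_union_right hw
        have hrG : r * f a ∈ Ideal.span ({g : MvPolynomial (Fin (n + 1)) K |
            ∃ i j : Fin n, i < j ∧ g = f i * f j}
              ∪ f '' {j : Fin n | j ∉ Finset.cons a V haV}) :=
          Ideal.span_mono Set.subset_union_left hrfa_pairs
        exact Ideal.add_mem _ hyG (Ideal.add_mem _ hrG hwG)
      · apply le_inf
        · rw [Ideal.span_le]
          rintro g (⟨i, j, hij, rfl⟩ | ⟨j, hj, rfl⟩)
          · exact pg_pairs_mem f _ hij
          · apply Ideal.subset_span
            refine ⟨j, ?_, rfl⟩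
            simp only [Set.mem_setOf_eq, Finset.mem_cons, not_or] at hj
            simp [Finset.mem_erase, hj.1]
        · rw [Ideal.span_le]
          rintro g (⟨i, j, hij, rfl⟩ | ⟨j, hj, rfl⟩)
          · exact Ideal.subset_span (Or.inl ⟨i, j, hij, rfl⟩)
          · apply Ideal.subset_span
            refine Or.inr ⟨j, ?_, rfl⟩
            simp only [Set.mem_setOf_eq, Finset.mem_cons, not_or] at hj
            exact hj.2

end PGG


/-- For linear forms `L j i` in `R = K[x_0,…,x_n]` satisfying condition (α')
(every selection is linearly independent, and the spanned `n`-dimensional subspaces are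
pairwise distinct for distinct selections), with `f j = ∏ i, L j i` and
`I = (f_i f_j : i < j)`, the ideal `I` is the intersection over `k` and over selections of
the ideals generated by `{L j (c j) : j ≠ k}`; each of these ideals is prime, and in
particular `I` is a radical ideal. -/
theorem pseudo_grid_primary_decomposition_and_radical
    (K : Type) [Field K] [Infinite K] (n : ℕ) (hn : 2 ≤ n)
    (ℓ : Fin n → ℕ) (hℓ : ∀ j, 0 < ℓ j)
    (L : (j : Fin n) → Fin (ℓ j) → MvPolynomial (Fin (n + 1)) K)
    (hLhom : ∀ j i, (L j i).IsHomogeneous 1)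
    (hα : ∀ c : (j : Fin n) → Fin (ℓ j), LinearIndependent K (fun j => L j (c j)))
    (hα' : ∀ c c' : (j : Fin n) → Fin (ℓ j), c ≠ c' →
      Submodule.span K (Set.range fun j => L j (c j)) ≠
        Submodule.span K (Set.range fun j => L j (c' j)))
    (f : Fin n → MvPolynomial (Fin (n + 1)) K)
    (hf : ∀ j, f j = ∏ i : Fin (ℓ j), L j i) :
    (Ideal.span {g : MvPolynomial (Fin (n + 1)) K | ∃ i j : Fin n, i < j ∧ g = f i * f j} =
      ⨅ (k : Fin n) (c : (j : Fin n) → Fin (ℓ j)),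
        Ideal.span {g : MvPolynomial (Fin (n + 1)) K | ∃ j : Fin n, j ≠ k ∧ g = L j (c j)}) ∧
    (∀ (k : Fin n) (c : (j : Fin n) → Fin (ℓ j)),
      (Ideal.span {g : MvPolynomial (Fin (n + 1)) K |
        ∃ j : Fin n, j ≠ k ∧ g = L j (c j)}).IsPrime) ∧
    (Ideal.span {g : MvPolynomial (Fin (n + 1)) K |
      ∃ i j : Fin n, i < j ∧ g = f i * f j}).IsRadical := by
  classical
  haveI : Nonempty (Fin n) := ⟨⟨0, by omega⟩⟩
  have hset : ∀ (k : Fin n) (c : (j : Fin n) → Fin (ℓ j)),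
      {g : MvPolynomial (Fin (n + 1)) K | ∃ j : Fin n, j ≠ k ∧ g = L j (c j)}
        = (fun j => L j (c j)) '' (↑(Finset.univ.erase k) : Set (Fin n)) := by
    intro k c
    ext g
    simp only [Set.mem_setOf_eq, Set.mem_image, Finset.coe_erase, Finset.coe_univ,
      Set.mem_diff, Set.mem_univ, true_and, Set.mem_singleton_iff]
    constructor
    · rintro ⟨j, hj, rfl⟩; exact ⟨j, hj, rfl⟩
    · rintro ⟨j, hj, rfl⟩; exact ⟨j, hj, rfl⟩
  have hQ : ∀ (k : Fin n) (c : (j : Fin n) → Fin (ℓ j)),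
      Ideal.span {g : MvPolynomial (Fin (n + 1)) K | ∃ j : Fin n, j ≠ k ∧ g = L j (c j)}
        = pgQ L (Finset.univ.erase k) c := by
    intro k c; rw [hset k c]; rfl
  have hprime : ∀ (k : Fin n) (c : (j : Fin n) → Fin (ℓ j)),
      (Ideal.span {g : MvPolynomial (Fin (n + 1)) K |
        ∃ j : Fin n, j ≠ k ∧ g = L j (c j)}).IsPrime := by
    intro k c; rw [hQ]; exact pg_prime L hLhom hα _ _
  have hmain : Ideal.span {g : MvPolynomial (Fin (n + 1)) K |
      ∃ i j : Fin n, i < j ∧ g = f i * f j} =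
      ⨅ (k : Fin n) (c : (j : Fin n) → Fin (ℓ j)),
        Ideal.span {g : MvPolynomial (Fin (n + 1)) K | ∃ j : Fin n, j ≠ k ∧ g = L j (c j)} := by
    have h1 : ∀ k : Fin n, (⨅ c : (j : Fin n) → Fin (ℓ j),
        Ideal.span {g : MvPolynomial (Fin (n + 1)) K | ∃ j : Fin n, j ≠ k ∧ g = L j (c j)})
        = Ideal.span (f '' ↑(Finset.univ.erase k)) := by
      intro k
      simp_rw [hQ]
      exact (pg_erase_eq_iInf L hℓ hLhom hα hα' f hf k).symm
    simp_rw [h1]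
    have h2 := pg_claimD L hℓ hLhom hα hα' f hf Finset.univ Finset.univ_nonempty
    have h3 : {j : Fin n | j ∉ (Finset.univ : Finset (Fin n))} = ∅ := by ext j; simp
    rw [h3, Set.image_empty, Set.union_empty] at h2
    rw [← h2]
    simp
  refine ⟨hmain, hprime, ?_⟩
  rw [hmain]
  intro x hx
  obtain ⟨m, hm⟩ := hx
  simp only [Submodule.mem_iInf] at hm ⊢
  intro k c
  exact (hprime k c).isRadical ⟨m, hm k c⟩
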